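/- Every first countable regular topological space is open Whyburn: for every open set A ⊆ X and every point x ∈ closure(A) \ A, there exists an open set B ⊆ A such that closure(B) \ A = {x}. -/
import Mathlib

open Topology


theorem firstCountable_regular_openWhyburn {X : Type*} [TopologicalSpace X]
    [T1Space X] [RegularSpace X] [FirstCountableTopology X] :
    ∀ A : Set X, IsOpen A → ∀ x ∈ closure A \ A,
      ∃ B : Set X, IsOpen B ∧ B ⊆ A ∧ closure B \ A = {x} := by
  intro A hA x hx
  obtain ⟨hxc, hxA⟩ := hx
  obtain ⟨u, hu⟩ := (𝓝 x).exists_antitone_basis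
  have hc : ∀ n : ℕ, ∃ c : Set X, c ∈ 𝓝 x ∧ IsClosed c ∧ c ⊆ u n := by
    intro n
    obtain ⟨c, h1, h2, h3⟩ := exists_mem_nhds_isClosed_subset (hu.1.mem_of_mem (i:=n) trivial)
    exact ⟨c, h1, h2, h3⟩
  choose c hc1 hc2 hc3 using hc
  set d : ℕ → Set X := fun n => ⋂ k ∈ Set.Iic n, c k with hd
  have hdn : ∀ n, d n ∈ 𝓝 x := fun n =>
    (Filter.biInter_mem (Set.finite_Iic n)).2 fun k _ => hc1 k
  have hdcl : ∀ n, IsClosed (d n) := fun n =>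
    isClosed_biInter fun k _ => hc2 k
  have hdsub : ∀ {k n : ℕ}, k ≤ n → d n ⊆ c k := fun {k n} h =>
    Set.biInter_subset_of_mem h
  have hdmono : ∀ {m n : ℕ}, m ≤ n → d n ⊆ d m := by
    intro m n h p hp
    exact Set.mem_biInter fun k hk => Set.biInter_subset_of_mem
      (show k ∈ Set.Iic n from le_trans hk h) hp
  have hV : ∀ n : ℕ, ∃ V : Set X,
      IsOpen V ∧ V.Nonempty ∧ closure V ⊆ A ∧ closure V ⊆ d n := by
    intro n
    have hO : IsOpen (interior (d n) ∩ A) := isOpen_interior.inter hA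
    have hne : (interior (d n) ∩ A).Nonempty :=
      mem_closure_iff_nhds.mp hxc _ (interior_mem_nhds.2 (hdn n))
    obtain ⟨p, hp⟩ := hne
    obtain ⟨e, he1, he2, he3⟩ := exists_mem_nhds_isClosed_subset (hO.mem_nhds hp)
    refine ⟨interior e, isOpen_interior, ⟨p, mem_interior_iff_mem_nhds.2 he1⟩, ?_, ?_⟩
    · exact (closure_minimal interior_subset he2).trans
        (he3.trans Set.inter_subset_right)
    · exact (closure_minimal interior_subset he2).trans
        (he3.trans (Set.inter_subset_left.trans interior_subset))
  choose V hVo hVne hVA hVd using hV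
  refine ⟨⋃ n, V n, isOpen_iUnion hVo, Set.iUnion_subset fun n => subset_closure.trans (hVA n), ?_⟩
  apply Set.eq_singleton_iff_unique_mem.2
  constructor
  · refine ⟨mem_closure_iff_nhds.2 fun s hs => ?_, hxA⟩
    obtain ⟨n, -, hsub⟩ := hu.1.mem_iff.mp hs
    obtain ⟨p, hp⟩ := hVne n
    exact ⟨p, hsub (hc3 n (hdsub le_rfl (hVd n (subset_closure hp)))),
      Set.mem_iUnion.2 ⟨n, hp⟩⟩
  · rintro y ⟨hyB, hyA⟩
    by_contra hne
    have hyn : {y}ᶜ ∈ 𝓝 x :=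
      isOpen_compl_singleton.mem_nhds (fun h => hne (h.symm ▸ rfl))
    obtain ⟨n, -, hsub⟩ := hu.1.mem_iff.mp hyn
    have hyu : y ∉ u n := fun h => hsub h rfl
    have hyd : y ∉ d n := fun h => hyu (hc3 n (hdsub le_rfl h))
    have hsplit : (⋃ m, V m) ⊆ (⋃ m ∈ Set.Iio n, closure (V m)) ∪ d n := by
      intro p hp
      obtain ⟨m, hm⟩ := Set.mem_iUnion.mp hp
      rcases lt_or_ge m n with h | h
      · exact Or.inl (Set.mem_biUnion h (subset_closure hm))
      · exact Or.inr (hdmono h (hVd m (subset_closure hm)))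
    have hclosed : IsClosed ((⋃ m ∈ Set.Iio n, closure (V m)) ∪ d n) :=
      ((Set.finite_Iio n).isClosed_biUnion (fun m _ => isClosed_closure)).union (hdcl n)
    have hcl : closure (⋃ m, V m) ⊆ (⋃ m ∈ Set.Iio n, closure (V m)) ∪ d n :=
      closure_minimal hsplit hclosed
    rcases hcl hyB with h | h
    · obtain ⟨m, -, hm⟩ := Set.mem_iUnion₂.mp h
      exact hyA (hVA m hm)
    · exact hyd h
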